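/- arXiv:1109.4019 — 3 statements merged into one kernel-verified Lean document; each statement's English description precedes it below -/
import Mathlib

section
/- Let Λ and Γ be finite dimensional Frobenius k-algebras with Nakayama automorphisms ν_Λ and ν_Γ respectively. Then Λ ⊗_k Γ is a Frobenius k-algebra, and ν_Λ ⊗ ν_Γ is a Nakayama automorphism for Λ ⊗_k Γ. -/
open scoped TensorProduct

/-- if `Λ` and `Γ` are finite dimensional Frobenius `k`-algebras with Nakayama
automorphisms `ν_Λ` and `ν_Γ` (associated to left-module isomorphisms `φ_Λ : Λ ≅ D(Λ)`,
`φ_Γ : Γ ≅ D(Γ)`), then `Λ ⊗[k] Γ` is Frobenius with `ν_Λ ⊗ ν_Γ` as a Nakayama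
automorphism.  Here an isomorphism `φ : A ≅ D(A)` of left `A`-modules is encoded by the
condition `φ(l·x) z = φ(x)(z·l)`, and the Nakayama property by `φ(1)(l·x) = φ(1)(ν(x)·l)`. -/
theorem stmt_9 (k : Type*) [Field k] (Λ Γ : Type*) [Ring Λ] [Ring Γ]
    [Algebra k Λ] [Algebra k Γ] [Module.Finite k Λ] [Module.Finite k Γ]
    (φΛ : Λ ≃ₗ[k] Module.Dual k Λ)
    (hφΛ : ∀ l x z : Λ, φΛ (l * x) z = φΛ x (z * l))
    (νΛ : Λ ≃ₐ[k] Λ)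
    (hνΛ : ∀ l x : Λ, φΛ 1 (l * x) = φΛ 1 (νΛ x * l))
    (φΓ : Γ ≃ₗ[k] Module.Dual k Γ)
    (hφΓ : ∀ l x z : Γ, φΓ (l * x) z = φΓ x (z * l))
    (νΓ : Γ ≃ₐ[k] Γ)
    (hνΓ : ∀ l x : Γ, φΓ 1 (l * x) = φΓ 1 (νΓ x * l)) :
    ∃ φ : (Λ ⊗[k] Γ) ≃ₗ[k] Module.Dual k (Λ ⊗[k] Γ),
      (∀ l x z : Λ ⊗[k] Γ, φ (l * x) z = φ x (z * l)) ∧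
      (∀ l x : Λ ⊗[k] Γ,
        φ 1 (l * x) = φ 1 ((Algebra.TensorProduct.congr νΛ νΓ) x * l)) := by
  set φ : (Λ ⊗[k] Γ) ≃ₗ[k] Module.Dual k (Λ ⊗[k] Γ) :=
    (TensorProduct.congr φΛ φΓ).trans (TensorProduct.dualDistribEquiv k Λ Γ) with hφ
  have key : ∀ (a : Λ) (b : Γ) (m : Λ) (n : Γ),
      φ (a ⊗ₜ b) (m ⊗ₜ n) = φΛ a m * φΓ b n := by
    intro a b m n
    simp [hφ, TensorProduct.dualDistribEquiv, TensorProduct.dualDistribEquivOfBasis,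
      TensorProduct.dualDistrib_apply]
  refine ⟨φ, ?_, ?_⟩
  · intro l x z
    induction l using TensorProduct.induction_on with
    | zero => simp
    | add u v hu hv =>
        simp only [add_mul, mul_add, map_add, LinearMap.add_apply, hu, hv]
    | tmul la lb =>
      induction x using TensorProduct.induction_on with
      | zero => simp
      | add u v hu hv =>
          simp only [mul_add, map_add, LinearMap.add_apply, hu, hv]
      | tmul xa xb =>
        induction z using TensorProduct.induction_on with
        | zero => simp
        | add u v hu hv =>
            simp only [add_mul, map_add, LinearMap.map_add, hu, hv]
        | tmul za zb =>
            simp only [Algebra.TensorProduct.tmul_mul_tmul, key, hφΛ, hφΓ]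
  · intro l x
    induction l using TensorProduct.induction_on with
    | zero => simp
    | add u v hu hv =>
        simp only [add_mul, mul_add, map_add, LinearMap.map_add, hu, hv]
    | tmul la lb =>
      induction x using TensorProduct.induction_on with
      | zero => simp
      | add u v hu hv =>
          simp only [mul_add, add_mul, map_add, LinearMap.map_add, hu, hv]
      | tmul xa xb =>
          rw [show (1 : Λ ⊗[k] Γ) = (1 : Λ) ⊗ₜ[k] (1 : Γ) from rfl]
          simp only [Algebra.TensorProduct.tmul_mul_tmul,
            Algebra.TensorProduct.congr_apply, Algebra.TensorProduct.map_tmul,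
            AlgHom.coe_coe, key]
          rw [hνΛ la xa, hνΓ lb xb]; rfl
end

section
/- Let k be a field of characteristic p ≠ 2 and let A = k⟨X₁,…,X_c⟩/(X_i², X_iX_j + X_jX_i) be the exterior algebra on c generators. Define d : A^c → A on the basis by d(x_c^{u_c}⋯x_1^{u_1} e_w) = ((−1)^{u_{w+1}+⋯+u_c} − (−1)^{u_1+⋯+u_{w−1}}) x_c^{u_c}⋯x_w^{u_w+1}⋯x_1^{u_1} (with exponents u_i ∈ {0,1}). Then a monomial x_c^{u_c}⋯x_1^{u_1} lies in the image of d if and only if u_1 + ⋯ + u_c is a positive even number; consequently dim_k(Im d) = 2^{c−1} − 1. -/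
open scoped Finset

/-- The `i`th generator `x_i` of the exterior algebra on `Fin c → k`. -/
noncomputable def extGen (k : Type*) [Field k] (c : ℕ) (i : Fin c) :
    ExteriorAlgebra k (Fin c → k) :=
  ExteriorAlgebra.ι k (Pi.single i 1)

/-- The monomial `x_c^{u_c} ⋯ x_1^{u_1}` (product taken in decreasing order of the index). -/
noncomputable def extMono (k : Type*) [Field k] (c : ℕ) (u : Fin c → ℕ) :
    ExteriorAlgebra k (Fin c → k) :=
  (((List.finRange c).reverse).map (fun i => extGen k c i ^ u i)).prod

namespace Stmt14

variable {k : Type*} [Field k] {c : ℕ}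

lemma xsq (i : Fin c) : extGen k c i * extGen k c i = 0 :=
  ExteriorAlgebra.ι_sq_zero _

lemma xswap (i j : Fin c) : extGen k c i * extGen k c j = -(extGen k c j * extGen k c i) := by
  have h := ExteriorAlgebra.ι_add_mul_swap (R := k)
    (Pi.single i (1:k) : Fin c → k) (Pi.single j (1:k))
  have h2 := eq_neg_of_add_eq_zero_left h
  simpa [extGen] using h2

lemma xpow_swap (i j : Fin c) (n : ℕ) :
    extGen k c i * extGen k c j ^ n = ((-1 : k) ^ n) • (extGen k c j ^ n * extGen k c i) := by
  induction n with
  | zero => simp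
  | succ n ih =>
    rw [pow_succ, ← mul_assoc, ih, smul_mul_assoc, mul_assoc, xswap i j, pow_succ]
    rw [mul_neg, smul_neg, mul_assoc]
    rw [show ((-1:k)^n * -1) = -((-1:k)^n) by ring, neg_smul]

end Stmt14

namespace Stmt14
variable {k : Type*} [Field k] {c : ℕ}

lemma mulInsert (u : Fin c → ℕ) (i : Fin c) :
    ∀ (l₁ l₂ : List (Fin c)), i ∉ l₁ → i ∉ l₂ →
    extGen k c i * ((l₁ ++ i :: l₂).map (fun j => extGen k c j ^ u j)).prod
      = ((-1:k) ^ ((l₁.map u).sum)) •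
        ((l₁ ++ i :: l₂).map (fun j => extGen k c j ^ (Function.update u i (u i + 1)) j)).prod := by
  intro l₁
  induction l₁ with
  | nil =>
    intro l₂ _ hi2
    simp only [List.nil_append, List.map_cons, List.prod_cons, List.map_nil, List.sum_nil,
      pow_zero, one_smul, ← mul_assoc]
    rw [Function.update_self, ← pow_succ']
    congr 1
    refine congrArg List.prod (List.map_congr_left (fun j hj => ?_))
    rw [Function.update_of_ne (fun h : j = i => hi2 (h ▸ hj)) _ _]
  | cons a l₁ ih =>
    intro l₂ hi1 hi2
    have hai : a ≠ i := fun h => hi1 (h ▸ List.mem_cons_self (a := a) (l := l₁))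
    have hi1' : i ∉ l₁ := fun h => hi1 (List.mem_cons_of_mem a h)
    simp only [List.cons_append, List.map_cons, List.prod_cons, List.sum_cons, ← mul_assoc]
    rw [xpow_swap, smul_mul_assoc, mul_assoc, ih l₂ hi1' hi2, mul_smul_comm, smul_smul,
      ← pow_add, Function.update_of_ne hai]

lemma split_sorted (i : Fin c) :
    ∀ (l : List (Fin c)), l.Pairwise (· > ·) → i ∈ l →
      l = l.filter (fun j => i < j) ++ i :: l.filter (fun j => j < i) := by
  intro l
  induction l with
  | nil => intro _ h; simp at h
  | cons a l ih =>
    intro hp hm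
    have ha : ∀ b ∈ l, b < a := fun b hb => (List.pairwise_cons.mp hp).1 b hb
    rcases List.mem_cons.mp hm with h | h
    · subst h
      have h1 : l.filter (fun j => i < j) = [] := by
        refine List.filter_eq_nil_iff.mpr (fun b hb => ?_)
        simpa using not_lt_of_gt (ha b hb)
      have h2 : l.filter (fun j => j < i) = l := by
        refine List.filter_eq_self.mpr (fun b hb => by simpa using ha b hb)
      simp [h1, h2]
    · have hia : i < a := ha i h
      have := ih (List.pairwise_cons.mp hp).2 h
      rw [List.filter_cons_of_pos (by simpa using hia), List.filter_cons_of_neg (by simp [asymm hia]),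
        List.cons_append]
      exact congrArg (a :: ·) this

lemma list_sum_filter (p : Fin c → Prop) [DecidablePred p] (u : Fin c → ℕ) :
    ∀ l : List (Fin c),
      ((l.filter (fun j => decide (p j))).map u).sum = (l.map (fun j => if p j then u j else 0)).sum := by
  intro l
  induction l with
  | nil => simp
  | cons a l ih =>
    by_cases h : p a
    · rw [List.filter_cons_of_pos (by simpa using h)]
      simp [h, ih]
    · rw [List.filter_cons_of_neg (by simpa using h)]
      simp [h, ih]

lemma sum_filter_univ (p : Fin c → Prop) [DecidablePred p] (u : Fin c → ℕ) :
    ((((List.finRange c).reverse).filter (fun j => decide (p j))).map u).sum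
      = ∑ j ∈ Finset.univ.filter p, u j := by
  rw [List.filter_reverse, List.map_reverse, List.sum_reverse, list_sum_filter,
    Finset.sum_filter, Fin.sum_univ_def]

lemma pairwise_gt_rev : ((List.finRange c).reverse).Pairwise (· > ·) := by
  rw [List.pairwise_reverse]
  exact List.pairwise_lt_finRange c

lemma mulMono (u : Fin c → ℕ) (i : Fin c) :
    extGen k c i * extMono k c u
      = ((-1 : k) ^ (∑ j ∈ Finset.univ.filter (fun j => i < j), u j)) •
        extMono k c (Function.update u i (u i + 1)) := by
  have hsplit := split_sorted i ((List.finRange c).reverse) pairwise_gt_rev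
    (by simp [List.mem_finRange])
  have hni1 : i ∉ ((List.finRange c).reverse).filter (fun j => decide (i < j)) := by
    intro h; exact absurd (by simpa using (List.of_mem_filter h)) (lt_irrefl i)
  have hni2 : i ∉ ((List.finRange c).reverse).filter (fun j => decide (j < i)) := by
    intro h; exact absurd (by simpa using (List.of_mem_filter h)) (lt_irrefl i)
  unfold extMono
  conv_lhs => rw [hsplit]
  conv_rhs => rw [hsplit]
  rw [mulInsert u i _ _ hni1 hni2, sum_filter_univ]

end Stmt14

namespace Stmt14
variable {k : Type*} [Field k] {c : ℕ}

lemma mono_zero_of_two_le (u : Fin c → ℕ) (i : Fin c) (h : 2 ≤ u i) :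
    extMono k c u = 0 := by
  obtain ⟨m, hm⟩ : ∃ m, u i = m + 2 := ⟨u i - 2, by omega⟩
  have hz : extGen k c i ^ u i = 0 := by
    rw [hm, pow_add, pow_two, xsq, mul_zero]
  refine List.prod_eq_zero ?_
  rw [← hz]
  exact List.mem_map_of_mem (by simp [List.mem_finRange])

/-- The indicator exponent function of a finite set. -/
def ind (s : Finset (Fin c)) : Fin c → ℕ := fun i => if i ∈ s then 1 else 0

lemma ind_le_one (s : Finset (Fin c)) : ∀ i, ind s i ≤ 1 := by
  intro i; unfold ind; split <;> omega

/-- The monomial with support `s`. -/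
noncomputable def eta (k : Type*) [Field k] (c : ℕ) (s : Finset (Fin c)) :
    ExteriorAlgebra k (Fin c → k) := extMono k c (ind s)

lemma extMono_eq_eta (u : Fin c → ℕ) (hu : ∀ i, u i ≤ 1) :
    extMono k c u = eta k c (Finset.univ.filter (fun i => u i = 1)) := by
  unfold eta
  congr 1
  funext i
  have := hu i
  unfold ind
  simp only [Finset.mem_filter, Finset.mem_univ, true_and]
  interval_cases h : u i <;> simp

lemma eta_empty : eta k c ∅ = 1 := by
  unfold eta extMono
  refine List.prod_eq_one ?_
  intro x hx
  obtain ⟨j, _, rfl⟩ := List.mem_map.mp hx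
  simp [ind]

end Stmt14

namespace Stmt14
variable {k : Type*} [Field k] {c : ℕ}

/-- Sign of inserting `i` into `s` (number of larger elements). -/
def sgn (i : Fin c) (s : Finset (Fin c)) : k :=
  (-1) ^ (s.filter (fun j => i < j)).card

/-- Creation operator on the concrete model. -/
noncomputable def Lop (i : Fin c) : (Finset (Fin c) →₀ k) →ₗ[k] (Finset (Fin c) →₀ k) :=
  Finsupp.linearCombination k
    (fun s => if i ∈ s then (0 : Finset (Fin c) →₀ k)
      else sgn (k := k) i s • Finsupp.single (insert i s) (1 : k))

lemma Lop_single (i : Fin c) (s : Finset (Fin c)) :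
    Lop (k := k) i (Finsupp.single s 1)
      = if i ∈ s then 0 else sgn (k := k) i s • Finsupp.single (insert i s) (1 : k) := by
  unfold Lop
  rw [Finsupp.linearCombination_single, one_smul]

lemma sgn_insert (i j : Fin c) (s : Finset (Fin c)) (hij : i ≠ j) (hj : j ∉ s) :
    sgn (k := k) i (insert j s) = (if i < j then -1 else 1) * sgn i s := by
  unfold sgn
  rw [Finset.filter_insert]
  by_cases h : i < j
  · rw [if_pos h, Finset.card_insert_of_notMem (by simp [hj]), pow_succ, if_pos h]
    ring
  · rw [if_neg h, if_neg h, one_mul]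

lemma Lop_anti (i j : Fin c) (s : Finset (Fin c)) :
    Lop (k := k) i (Lop j (Finsupp.single s 1)) + Lop j (Lop i (Finsupp.single s 1)) = 0 := by
  rcases eq_or_ne i j with rfl | hij
  · rw [Lop_single]
    by_cases h : i ∈ s
    · simp [h]
    · rw [if_neg h, map_smul, Lop_single, if_pos (Finset.mem_insert_self i s)]
      simp
  · by_cases hi : i ∈ s <;> by_cases hj : j ∈ s
    · simp [Lop_single, hi, hj]
    · rw [Lop_single i s, Lop_single j s, if_pos hi, if_neg hj, map_zero, map_smul, Lop_single,
        if_pos (Finset.mem_insert_of_mem hi)]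
      simp
    · rw [Lop_single i s, Lop_single j s, if_neg hi, if_pos hj, map_zero, map_smul, Lop_single,
        if_pos (Finset.mem_insert_of_mem hj)]
      simp
    · rw [Lop_single i s, Lop_single j s, if_neg hi, if_neg hj, map_smul, map_smul,
        Lop_single, Lop_single, if_neg (by simp [hij, hi] : ¬ i ∈ insert j s),
        if_neg (by simp [Ne.symm hij, hj] : ¬ j ∈ insert i s),
        sgn_insert i j s hij hj, sgn_insert j i s (Ne.symm hij) hi,
        Finset.insert_comm]
      rw [smul_smul, smul_smul]
      rw [← add_smul]
      convert zero_smul k _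
      rcases lt_or_gt_of_ne hij with h | h
      · rw [if_pos h, if_neg (asymm h)]; ring
      · rw [if_neg (asymm h), if_pos h]; ring

end Stmt14

namespace Stmt14
variable {k : Type*} [Field k] {c : ℕ}

lemma Lop_mul_add (i j : Fin c) :
    (Lop (k := k) i * Lop j + Lop j * Lop i : Module.End k (Finset (Fin c) →₀ k)) = 0 := by
  refine Finsupp.lhom_ext' (fun s => LinearMap.ext_ring ?_)
  simp only [LinearMap.comp_apply, LinearMap.add_apply, Module.End.mul_apply,
    LinearMap.zero_apply]
  exact Lop_anti i j s

noncomputable def fOp : (Fin c → k) →ₗ[k] Module.End k (Finset (Fin c) →₀ k) :=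
  ∑ i, (LinearMap.proj i).smulRight (Lop i)

lemma fOp_apply (m : Fin c → k) :
    fOp m = ∑ i, m i • (Lop i : Module.End k (Finset (Fin c) →₀ k)) := by
  simp [fOp, LinearMap.sum_apply]

lemma fOp_sq (h2 : (2 : k) ≠ 0) (m : Fin c → k) : fOp m * fOp m = 0 := by
  rw [fOp_apply, Finset.sum_mul_sum]
  have hterm : ∀ i j : Fin c,
      (m i • (Lop i : Module.End k (Finset (Fin c) →₀ k))) * (m j • Lop j)
        = (m i * m j) • ((Lop i : Module.End k (Finset (Fin c) →₀ k)) * Lop j) := by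
    intro i j
    rw [smul_mul_assoc, mul_smul_comm, smul_smul]
  simp only [hterm]
  set S := ∑ i : Fin c, ∑ j : Fin c, (m i * m j) • ((Lop i : Module.End k (Finset (Fin c) →₀ k)) * Lop j) with hS
  have h2S : (2 : k) • S = 0 := by
    rw [two_smul]
    nth_rewrite 1 [hS, Finset.sum_comm]
    rw [hS, ← Finset.sum_add_distrib]
    refine Finset.sum_eq_zero (fun i _ => ?_)
    rw [← Finset.sum_add_distrib]
    refine Finset.sum_eq_zero (fun j _ => ?_)
    rw [mul_comm (m j) (m i), ← smul_add, Lop_mul_add j i, smul_zero]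
  rcases smul_eq_zero.mp h2S with h | h
  · exact absurd h h2
  · exact h

end Stmt14

namespace Stmt14
variable {k : Type*} [Field k] {c : ℕ}

noncomputable def phi (h2 : (2 : k) ≠ 0) :
    ExteriorAlgebra k (Fin c → k) →ₐ[k] Module.End k (Finset (Fin c) →₀ k) :=
  ExteriorAlgebra.lift k ⟨fOp, fOp_sq h2⟩

lemma phi_gen (h2 : (2 : k) ≠ 0) (i : Fin c) : phi h2 (extGen k c i) = Lop i := by
  unfold phi extGen
  rw [ExteriorAlgebra.lift_ι_apply, fOp_apply]
  rw [Finset.sum_eq_single_of_mem i (Finset.mem_univ i)]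
  · rw [Pi.single_eq_same, one_smul]
  · intro j _ hj
    rw [Pi.single_eq_of_ne hj, zero_smul]

lemma applyList (u : Fin c → ℕ) (hu : ∀ i, u i ≤ 1) :
    ∀ l : List (Fin c), l.Pairwise (· > ·) →
      ((l.map (fun i => (Lop i : Module.End k (Finset (Fin c) →₀ k)) ^ u i)).prod)
          (Finsupp.single ∅ 1)
        = Finsupp.single (l.toFinset.filter (fun i => u i = 1)) 1 := by
  intro l
  induction l with
  | nil => simp
  | cons a l ih =>
    intro hp
    have ha : ∀ b ∈ l, b < a := fun b hb => (List.pairwise_cons.mp hp).1 b hb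
    rw [List.map_cons, List.prod_cons, Module.End.mul_apply, ih (List.pairwise_cons.mp hp).2,
      List.toFinset_cons]
    have hanotin : a ∉ l.toFinset.filter (fun i => u i = 1) := by
      intro h
      exact absurd (ha a (List.mem_toFinset.mp (Finset.mem_filter.mp h).1)) (lt_irrefl a)
    rcases Nat.le_one_iff_eq_zero_or_eq_one.mp (hu a) with h0 | h1
    · rw [h0, pow_zero, Module.End.one_apply, Finset.filter_insert, if_neg (by simp [h0])]
    · rw [h1, pow_one, Lop_single, if_neg hanotin, Finset.filter_insert, if_pos h1]
      have hsgn : sgn (k := k) a (l.toFinset.filter (fun i => u i = 1)) = 1 := by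
        unfold sgn
        rw [Finset.filter_eq_empty_iff.mpr ?_, Finset.card_empty, pow_zero]
        intro b hb
        exact asymm (ha b (List.mem_toFinset.mp (Finset.mem_filter.mp hb).1))
      rw [hsgn, one_smul]

lemma phi_mono (h2 : (2 : k) ≠ 0) (u : Fin c → ℕ) (hu : ∀ i, u i ≤ 1) :
    (phi (c := c) h2 (extMono k c u)) (Finsupp.single ∅ 1)
      = Finsupp.single (Finset.univ.filter (fun i => u i = 1)) 1 := by
  unfold extMono
  rw [map_list_prod, List.map_map]
  have hmap : ((phi (c := c) h2) ∘ fun i => extGen k c i ^ u i)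
      = fun i => (Lop i : Module.End k (Finset (Fin c) →₀ k)) ^ u i := by
    funext i
    simp only [Function.comp_apply, map_pow, phi_gen h2 i]
  rw [hmap, applyList u hu _ pairwise_gt_rev, List.toFinset_reverse, List.toFinset_finRange]

noncomputable def psiL (h2 : (2 : k) ≠ 0) :
    ExteriorAlgebra k (Fin c → k) →ₗ[k] (Finset (Fin c) →₀ k) :=
  (LinearMap.applyₗ (Finsupp.single ∅ 1)).comp (phi (c := c) h2).toLinearMap

lemma eta_indep (h2 : (2 : k) ≠ 0) : LinearIndependent k (eta k c) := by
  refine LinearIndependent.of_comp (psiL (c := c) h2) ?_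
  have hcomp : (psiL (c := c) h2) ∘ (eta k c) = fun s => Finsupp.single s (1 : k) := by
    funext s
    show (phi (c := c) h2 (eta k c s)) (Finsupp.single ∅ 1) = _
    rw [eta, phi_mono h2 _ (ind_le_one s)]
    congr 1
    ext i
    simp [ind]
  rw [hcomp, ← Finsupp.coe_basisSingleOne]
  exact Finsupp.basisSingleOne.linearIndependent

end Stmt14

namespace Stmt14
variable {k : Type*} [Field k] {c : ℕ}

lemma update_ind (s : Finset (Fin c)) (i : Fin c) (hi : i ∉ s) :
    Function.update (ind s) i (ind s i + 1) = ind (insert i s) := by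
  funext j
  rcases eq_or_ne j i with rfl | hj
  · rw [Function.update_self]
    simp [ind, hi]
  · rw [Function.update_of_ne hj]
    simp [ind, Finset.mem_insert, hj]

lemma xmul_eta_mem (i : Fin c) (s : Finset (Fin c)) :
    extGen k c i * eta k c s ∈ Submodule.span k (Set.range (eta k c)) := by
  rw [eta, mulMono]
  by_cases hi : i ∈ s
  · rw [mono_zero_of_two_le _ i (by rw [Function.update_self]; simp [ind, hi]), smul_zero]
    exact Submodule.zero_mem _
  · rw [update_ind s i hi]
    exact Submodule.smul_mem _ _ (Submodule.subset_span ⟨insert i s, rfl⟩)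

lemma xmul_mem (i : Fin c) {y : ExteriorAlgebra k (Fin c → k)}
    (hy : y ∈ Submodule.span k (Set.range (eta k c))) :
    extGen k c i * y ∈ Submodule.span k (Set.range (eta k c)) := by
  induction hy using Submodule.span_induction with
  | mem x hx =>
    obtain ⟨s, rfl⟩ := hx
    exact xmul_eta_mem i s
  | zero => rw [mul_zero]; exact Submodule.zero_mem _
  | add a b _ _ ha hb => rw [mul_add]; exact Submodule.add_mem _ ha hb
  | smul r a _ ha => rw [mul_smul_comm]; exact Submodule.smul_mem _ _ ha

lemma mul_mem_span (a : ExteriorAlgebra k (Fin c → k)) :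
    ∀ y ∈ Submodule.span k (Set.range (eta k c)),
      a * y ∈ Submodule.span k (Set.range (eta k c)) := by
  induction a using ExteriorAlgebra.induction with
  | algebraMap r =>
    intro y hy
    rw [← Algebra.smul_def]
    exact Submodule.smul_mem _ _ hy
  | ι m =>
    intro y hy
    have hm : ExteriorAlgebra.ι k m = ∑ i, m i • extGen k c i := by
      conv_lhs => rw [← Finset.univ_sum_single m]
      rw [map_sum]
      refine Finset.sum_congr rfl (fun i _ => ?_)
      rw [extGen, ← map_smul]
      congr 1
      rw [← Pi.single_smul, smul_eq_mul, mul_one]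
    rw [hm, Finset.sum_mul]
    refine Submodule.sum_mem _ (fun i _ => ?_)
    rw [smul_mul_assoc]
    exact Submodule.smul_mem _ _ (xmul_mem i hy)
  | mul a b ha hb =>
    intro y hy
    rw [mul_assoc]
    exact ha _ (hb y hy)
  | add a b ha hb =>
    intro y hy
    rw [add_mul]
    exact Submodule.add_mem _ (ha y hy) (hb y hy)

lemma eta_span : Submodule.span k (Set.range (eta k c)) = ⊤ := by
  rw [Submodule.eq_top_iff']
  intro a
  have := mul_mem_span a (eta k c ∅) (Submodule.subset_span ⟨∅, rfl⟩)
  rwa [eta_empty, mul_one] at this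

/-- The monomial basis of the exterior algebra. -/
noncomputable def monoBasis (h2 : (2 : k) ≠ 0) :
    Module.Basis (Finset (Fin c)) k (ExteriorAlgebra k (Fin c → k)) :=
  Module.Basis.mk (eta_indep h2) (by rw [eta_span])

lemma monoBasis_apply (h2 : (2 : k) ≠ 0) (s : Finset (Fin c)) :
    monoBasis (c := c) h2 s = eta k c s := by
  rw [monoBasis, Module.Basis.mk_apply]

end Stmt14

namespace Stmt14
variable {k : Type*} [Field k] {c : ℕ}

lemma filter_union_eq_erase (w : Fin c) :
    Finset.univ.filter (fun i => w < i) ∪ Finset.univ.filter (fun i => i < w)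
      = Finset.univ.erase w := by
  ext i
  simp only [Finset.mem_union, Finset.mem_filter, Finset.mem_univ, true_and, Finset.mem_erase,
    and_true]
  constructor
  · rintro (h | h) <;> [exact (ne_of_gt h); exact (ne_of_lt h)]
  · intro h
    rcases lt_or_gt_of_ne h with h | h
    · right; exact h
    · left; exact h

lemma sum_ind_univ (s : Finset (Fin c)) : ∑ i, ind s i = s.card := by
  rw [← Finset.filter_univ_mem s, Finset.card_filter]
  exact Finset.sum_congr rfl (fun i _ => by simp [ind])

lemma sum_split (s : Finset (Fin c)) (w : Fin c) (hw : w ∉ s) :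
    (∑ i ∈ Finset.univ.filter (fun i => w < i), ind s i)
      + (∑ i ∈ Finset.univ.filter (fun i => i < w), ind s i) = s.card := by
  rw [← Finset.sum_union (by
    rw [Finset.disjoint_filter]
    intro i _ h1 h2
    exact absurd (lt_trans h1 h2) (lt_irrefl w)), filter_union_eq_erase w,
    Finset.sum_erase _ (by simp [ind, hw]), sum_ind_univ]

lemma coeff_eq_zero_of_even (a b : ℕ) (h : Even (a + b)) :
    ((-1 : k) ^ a - (-1 : k) ^ b) = 0 := by
  rcases Nat.even_add.mp h with hab
  by_cases ha : Even a
  · rw [ha.neg_one_pow, (hab.mp ha).neg_one_pow, sub_self]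
  · rw [(Nat.not_even_iff_odd.mp ha).neg_one_pow,
      (Nat.not_even_iff_odd.mp (fun hb => ha (hab.mpr hb))).neg_one_pow, sub_self]

lemma coeff_ne_zero_of_odd (h2 : (2 : k) ≠ 0) (a b : ℕ) (h : ¬ Even (a + b)) :
    ((-1 : k) ^ a - (-1 : k) ^ b) ≠ 0 := by
  have hab : ¬ (Even a ↔ Even b) := fun hiff => h (Nat.even_add.mpr hiff)
  by_cases ha : Even a
  · have hb : ¬ Even b := fun hb => hab ⟨fun _ => hb, fun _ => ha⟩
    rw [ha.neg_one_pow, (Nat.not_even_iff_odd.mp hb).neg_one_pow]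
    intro hc
    exact h2 (by linear_combination hc)
  · have hb : Even b := by
      by_contra hb
      exact hab ⟨fun h' => absurd h' ha, fun h' => absurd h' hb⟩
    rw [(Nat.not_even_iff_odd.mp ha).neg_one_pow, hb.neg_one_pow]
    intro hc
    exact h2 (by linear_combination -hc)

lemma card_even_ne_empty :
    (Finset.univ.filter fun t : Finset (Fin c) => Even t.card ∧ t ≠ ∅).card
      = 2 ^ (c - 1) - 1 := by
  cases c with
  | zero =>
    have : (Finset.univ.filter fun t : Finset (Fin 0) => Even t.card ∧ t ≠ ∅) = ∅ := by
      refine Finset.filter_eq_empty_iff.mpr ?_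
      intro t _
      rw [not_and]
      intro _
      simp only [ne_eq, not_not]
      exact Finset.eq_empty_of_forall_notMem (fun i => i.elim0)
    rw [this, Finset.card_empty]
    norm_num
  | succ n =>
    set E := Finset.univ.filter (fun t : Finset (Fin (n+1)) => Even t.card) with hE
    have hfil : (Finset.univ.filter fun t : Finset (Fin (n+1)) => Even t.card ∧ t ≠ ∅)
        = E.erase ∅ := by
      ext t
      simp only [hE, Finset.mem_filter, Finset.mem_univ, true_and, Finset.mem_erase, ne_eq]
      tauto
    have hempty : ∅ ∈ E := by simp [hE]
    have hcards : E.card = (Finset.univ.filter fun t : Finset (Fin (n+1)) => ¬ Even t.card).card := by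
      refine Finset.card_bij' (fun t _ => if (0 : Fin (n+1)) ∈ t then t.erase 0 else insert 0 t)
        (fun t _ => if (0 : Fin (n+1)) ∈ t then t.erase 0 else insert 0 t) ?_ ?_ ?_ ?_
      · intro t ht
        simp only [hE, Finset.mem_filter, Finset.mem_univ, true_and] at ht ⊢
        by_cases h0 : (0 : Fin (n+1)) ∈ t
        · rw [if_pos h0, Finset.card_erase_of_mem h0]
          have hpos : 1 ≤ t.card := Finset.card_pos.mpr ⟨0, h0⟩
          rw [Nat.even_iff] at ht ⊢
          omega
        · rw [if_neg h0, Finset.card_insert_of_notMem h0]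
          rw [Nat.even_iff] at ht ⊢
          omega
      · intro t ht
        simp only [hE, Finset.mem_filter, Finset.mem_univ, true_and] at ht ⊢
        by_cases h0 : (0 : Fin (n+1)) ∈ t
        · rw [if_pos h0, Finset.card_erase_of_mem h0]
          have hpos : 1 ≤ t.card := Finset.card_pos.mpr ⟨0, h0⟩
          rw [Nat.even_iff] at ht ⊢
          omega
        · rw [if_neg h0, Finset.card_insert_of_notMem h0]
          rw [Nat.even_iff] at ht ⊢
          omega
      · intro t _
        by_cases h0 : (0 : Fin (n+1)) ∈ t
        · simp only [if_pos h0, if_neg (Finset.notMem_erase (0 : Fin (n+1)) t)]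
          exact Finset.insert_erase h0
        · simp only [if_neg h0, if_pos (Finset.mem_insert_self (0 : Fin (n+1)) t)]
          exact Finset.erase_insert h0
      · intro t _
        by_cases h0 : (0 : Fin (n+1)) ∈ t
        · simp only [if_pos h0, if_neg (Finset.notMem_erase (0 : Fin (n+1)) t)]
          exact Finset.insert_erase h0
        · simp only [if_neg h0, if_pos (Finset.mem_insert_self (0 : Fin (n+1)) t)]
          exact Finset.erase_insert h0
    have hsum : E.card
        + (Finset.univ.filter fun t : Finset (Fin (n+1)) => ¬ Even t.card).card
        = 2 ^ (n + 1) := by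
      rw [hE, Finset.card_filter_add_card_filter_not, Finset.card_univ,
        Fintype.card_finset, Fintype.card_fin]
    have hEcard : E.card = 2 ^ n := by
      rw [← hcards] at hsum
      have : 2 * E.card = 2 * 2 ^ n := by rw [pow_succ] at hsum; omega
      omega
    rw [hfil, Finset.card_erase_of_mem hempty, hEcard]
    simp

end Stmt14

namespace Stmt14
variable {k : Type*} [Field k] {c : ℕ}

lemma two_ne_zero' (p : ℕ) (hchar : CharP k p) (hp : p ≠ 2) : (2 : k) ≠ 0 := by
  haveI := hchar
  intro h
  have hdvd : p ∣ 2 := (CharP.cast_eq_zero_iff k p 2).mp (by exact_mod_cast h)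
  rcases (Nat.dvd_prime Nat.prime_two).mp hdvd with h1 | h1
  · exact CharP.char_ne_one k p h1
  · exact hp h1

section WithD

variable (d : (Fin c → ExteriorAlgebra k (Fin c → k)) →ₗ[k] ExteriorAlgebra k (Fin c → k))
variable (hd : ∀ (u : Fin c → ℕ), (∀ i, u i ≤ 1) → ∀ w : Fin c,
      d (Pi.single w (extMono k c u)) =
        ((-1 : k) ^ (∑ i ∈ Finset.univ.filter (fun i => w < i), u i) -
         (-1 : k) ^ (∑ i ∈ Finset.univ.filter (fun i => i < w), u i)) •
          extMono k c (Function.update u w (u w + 1)))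

/-- The target index set. -/
def T : Set (Finset (Fin c)) := {t | Even t.card ∧ t ≠ ∅}

include hd in
lemma range_d (h2 : (2 : k) ≠ 0) :
    LinearMap.range d = Submodule.span k (eta k c '' T) := by
  refine le_antisymm ?_ ?_
  · rw [LinearMap.range_eq_map, ← (Pi.basis (fun _ : Fin c => monoBasis (c := c) h2)).span_eq,
      Submodule.map_span, ← Set.range_comp]
    rw [Submodule.span_le]
    rintro _ ⟨⟨w, s⟩, rfl⟩
    simp only [Function.comp_apply, Pi.basis_apply, monoBasis_apply]
    rw [eta, hd (ind s) (ind_le_one s) w]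
    by_cases hw : w ∈ s
    · rw [mono_zero_of_two_le _ w (by rw [Function.update_self]; simp [ind, hw]), smul_zero]
      exact Submodule.zero_mem _
    · rw [update_ind s w hw]
      by_cases heven : Even s.card
      · rw [coeff_eq_zero_of_even _ _ (by rw [sum_split s w hw]; exact heven), zero_smul]
        exact Submodule.zero_mem _
      · refine Submodule.smul_mem _ _ (Submodule.subset_span ⟨insert w s, ?_, rfl⟩)
        constructor
        · rw [Finset.card_insert_of_notMem hw, Nat.even_add_one]
          exact heven
        · exact Finset.insert_ne_empty w s
  · rw [Submodule.span_le]
    rintro _ ⟨t, ⟨hteven, htne⟩, rfl⟩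
    obtain ⟨w, hw⟩ := Finset.nonempty_iff_ne_empty.mpr htne
    set s := t.erase w with hs
    have hws : w ∉ s := Finset.notMem_erase w t
    have hins : insert w s = t := Finset.insert_erase hw
    have hodd : ¬ Even ((∑ i ∈ Finset.univ.filter (fun i => w < i), ind s i)
        + (∑ i ∈ Finset.univ.filter (fun i => i < w), ind s i)) := by
      rw [sum_split s w hws, hs, Finset.card_erase_of_mem hw]
      intro h
      have hpos : 1 ≤ t.card := Finset.card_pos.mpr ⟨w, hw⟩
      rw [Nat.even_iff] at h hteven
      omega
    set C := ((-1 : k) ^ (∑ i ∈ Finset.univ.filter (fun i => w < i), ind s i) -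
         (-1 : k) ^ (∑ i ∈ Finset.univ.filter (fun i => i < w), ind s i)) with hC
    have hCne : C ≠ 0 := coeff_ne_zero_of_odd h2 _ _ hodd
    have hgen : d (Pi.single w (eta k c s)) = C • eta k c t := by
      rw [eta, hd (ind s) (ind_le_one s) w, update_ind s w hws, hins, eta]
    refine ⟨C⁻¹ • (Pi.single w (eta k c s) : Fin c → ExteriorAlgebra k (Fin c → k)), ?_⟩
    rw [map_smul, hgen, smul_smul, inv_mul_cancel₀ hCne, one_smul]

lemma sum_eq_card (u : Fin c → ℕ) (hu : ∀ i, u i ≤ 1) :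
    ∑ i, u i = (Finset.univ.filter fun i => u i = 1).card := by
  rw [Finset.card_filter]
  refine Finset.sum_congr rfl (fun i _ => ?_)
  have := hu i
  interval_cases h : u i <;> simp

lemma mem_span_eta_iff (h2 : (2 : k) ≠ 0) (s : Finset (Fin c)) :
    eta k c s ∈ Submodule.span k (eta k c '' T) ↔ s ∈ (T : Set (Finset (Fin c))) := by
  have hB : eta k c = ⇑(monoBasis (c := c) h2) := funext (fun t => (monoBasis_apply h2 t).symm)
  rw [hB, Module.Basis.mem_span_image, Module.Basis.repr_self,
    Finsupp.support_single_ne_zero _ (one_ne_zero)]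
  simp

end WithD

end Stmt14

namespace Stmt14
variable {k : Type*} [Field k] {c : ℕ}

lemma finrank_span_T (h2 : (2 : k) ≠ 0) :
    Module.finrank k (Submodule.span k (eta k c '' T)) = 2 ^ (c - 1) - 1 := by
  classical
  have hT : eta k c '' T
      = Set.range (fun t : {t : Finset (Fin c) // Even t.card ∧ t ≠ ∅} => eta k c t.1) := by
    rw [show (fun t : {t : Finset (Fin c) // Even t.card ∧ t ≠ ∅} => eta k c t.1)
        = (eta k c) ∘ Subtype.val from rfl, Set.range_comp, Subtype.range_coe_subtype]
    rfl
  rw [hT]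
  exact (finrank_span_eq_card ((eta_indep h2).comp Subtype.val Subtype.val_injective)).trans
    (by rw [Fintype.card_subtype]; exact card_even_ne_empty)

end Stmt14

/-- for the exterior algebra `A` on `c` generators over a field of
characteristic `p ≠ 2`, and `d : A^c → A` the `k`-linear map with
`d(x_c^{u_c}⋯x_1^{u_1} e_w) = ((-1)^{u_{w+1}+⋯+u_c} - (-1)^{u_1+⋯+u_{w-1}}) x_c^{u_c}⋯x_w^{u_w+1}⋯x_1^{u_1}`,
a monomial `x_c^{u_c}⋯x_1^{u_1}` lies in the image of `d` iff `u_1 + ⋯ + u_c` is a positive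
even number; consequently `dim_k (Im d) = 2^(c-1) - 1`. -/
theorem stmt_14 (k : Type*) [Field k] (p : ℕ) (hchar : CharP k p) (hp : p ≠ 2)
    (c : ℕ)
    (d : (Fin c → ExteriorAlgebra k (Fin c → k)) →ₗ[k] ExteriorAlgebra k (Fin c → k))
    (hd : ∀ (u : Fin c → ℕ), (∀ i, u i ≤ 1) → ∀ w : Fin c,
      d (Pi.single w (extMono k c u)) =
        ((-1 : k) ^ (∑ i ∈ Finset.univ.filter (fun i => w < i), u i) -
         (-1 : k) ^ (∑ i ∈ Finset.univ.filter (fun i => i < w), u i)) •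
          extMono k c (Function.update u w (u w + 1))) :
    (∀ (u : Fin c → ℕ), (∀ i, u i ≤ 1) →
        (extMono k c u ∈ LinearMap.range d ↔ Even (∑ i, u i) ∧ 0 < ∑ i, u i)) ∧
      Module.finrank k (LinearMap.range d) = 2 ^ (c - 1) - 1 := by
  have h2 : (2 : k) ≠ 0 := Stmt14.two_ne_zero' p hchar hp
  have hrange := Stmt14.range_d d hd h2
  constructor
  · intro u hu
    rw [Stmt14.extMono_eq_eta u hu, hrange, Stmt14.mem_span_eta_iff h2,
      Stmt14.sum_eq_card u hu]
    show _ ∈ Stmt14.T ↔ _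
    unfold Stmt14.T
    simp only [Set.mem_setOf_eq]
    constructor
    · rintro ⟨he, hne⟩
      exact ⟨he, Finset.card_pos.mpr (Finset.nonempty_iff_ne_empty.mpr hne)⟩
    · rintro ⟨he, hpos⟩
      exact ⟨he, Finset.nonempty_iff_ne_empty.mp (Finset.card_pos.mp hpos)⟩
  · rw [hrange]
    exact Stmt14.finrank_span_T h2
end

section
/- Let k be a field, q ∈ k not a root of unity, a, b ≥ 2, and A = k⟨X,Y⟩/(X^a, XY − qYX, Y^b). Let ν be the algebra automorphism of A determined by ν(x) = q^{1−b} x and ν(y) = q^{a−1} y. Define d : A ⊕ A → A by d(y^u x^v, 0) = (q^{u+1−b} − 1) y^u x^{v+1} and d(0, y^u x^v) = (q^{a−1} − q^v) y^{u+1} x^v. Then a basis monomial y^u x^v (0 ≤ u < b, 0 ≤ v < a) lies in the image of d if and only if (u,v) ∉ {(0,0), (b−1, a−1)}; hence dim_k(Im d) = ab − 2. -/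
/-- The relations defining the quantum complete intersection
`k⟨X,Y⟩/(X^a, XY - qYX, Y^b)` (`true` ↦ `X`, `false` ↦ `Y`). -/
inductive QCIRel (k : Type*) [Field k] (q : k) (a b : ℕ) :
    FreeAlgebra k Bool → FreeAlgebra k Bool → Prop
  | xa : QCIRel k q a b ((FreeAlgebra.ι k true) ^ a) 0
  | yb : QCIRel k q a b ((FreeAlgebra.ι k false) ^ b) 0
  | comm : QCIRel k q a b (FreeAlgebra.ι k true * FreeAlgebra.ι k false)
      (q • (FreeAlgebra.ι k false * FreeAlgebra.ι k true))

/-- The quantum complete intersection `A = k⟨X,Y⟩/(X^a, XY - qYX, Y^b)`. -/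
abbrev QCI (k : Type*) [Field k] (q : k) (a b : ℕ) : Type _ := RingQuot (QCIRel k q a b)

/-- The image `x` of `X` in `A`. -/
noncomputable def qciX (k : Type*) [Field k] (q : k) (a b : ℕ) : QCI k q a b :=
  RingQuot.mkAlgHom k (QCIRel k q a b) (FreeAlgebra.ι k true)

/-- The image `y` of `Y` in `A`. -/
noncomputable def qciY (k : Type*) [Field k] (q : k) (a b : ℕ) : QCI k q a b :=
  RingQuot.mkAlgHom k (QCIRel k q a b) (FreeAlgebra.ι k false)

namespace QCIAux

variable {k : Type*} [Field k]

abbrev V (k : Type*) := ℕ × ℕ → k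

def e (p : ℕ × ℕ) : V k := fun r => if r = p then 1 else 0

def Xop (q : k) (a : ℕ) : V k →ₗ[k] V k where
  toFun f := fun p => if p.2 = 0 ∨ a ≤ p.2 then 0 else q ^ p.1 * f (p.1, p.2 - 1)
  map_add' f g := by funext p; by_cases h : p.2 = 0 ∨ a ≤ p.2 <;> simp [h, mul_add]
  map_smul' c f := by
    funext p; by_cases h : p.2 = 0 ∨ a ≤ p.2 <;> simp [h] <;> ring

def Yop (b : ℕ) : V k →ₗ[k] V k where
  toFun f := fun p => if p.1 = 0 ∨ b ≤ p.1 then 0 else f (p.1 - 1, p.2)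
  map_add' f g := by funext p; by_cases h : p.1 = 0 ∨ b ≤ p.1 <;> simp [h]
  map_smul' c f := by funext p; by_cases h : p.1 = 0 ∨ b ≤ p.1 <;> simp [h]

@[simp] lemma Xop_apply (q : k) (a : ℕ) (f : V k) (u v : ℕ) :
    Xop q a f (u, v) = if v = 0 ∨ a ≤ v then 0 else q ^ u * f (u, v - 1) := rfl

@[simp] lemma Yop_apply (b : ℕ) (f : V k) (u v : ℕ) :
    Yop (k := k) b f (u, v) = if u = 0 ∨ b ≤ u then 0 else f (u - 1, v) := rfl

lemma Xop_pow_apply (q : k) (a : ℕ) (j : ℕ) (f : V k) (u v : ℕ) (hv : v < a) :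
    (Xop q a ^ j) f (u, v) = if v < j then 0 else q ^ (j * u) * f (u, v - j) := by
  induction j generalizing f with
  | zero => simp
  | succ j ih =>
    rw [pow_succ, Module.End.mul_apply, ih]
    rcases Nat.lt_trichotomy v j with h | h | h
    · simp [h, Nat.lt_succ_of_lt h]
    · subst h
      simp [Nat.lt_succ_self, Nat.sub_self]
    · have h1 : ¬ v < j := by omega
      have h2 : ¬ v < j + 1 := by omega
      have h3 : ¬ (v - j = 0 ∨ a ≤ v - j) := by omega
      simp only [h1, if_false, h2, Xop_apply, h3]
      rw [Nat.sub_sub]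
      ring

lemma Xop_pow_high (q : k) (a : ℕ) (j : ℕ) (hj : j ≠ 0) (f : V k) (u v : ℕ) (hv : a ≤ v) :
    (Xop q a ^ j) f (u, v) = 0 := by
  obtain ⟨m, rfl⟩ := Nat.exists_eq_succ_of_ne_zero hj
  rw [pow_succ', Module.End.mul_apply, Xop_apply, if_pos (Or.inr hv)]

lemma Xop_pow_a (q : k) (a : ℕ) (ha : 1 ≤ a) : (Xop (k := k) q a) ^ a = 0 := by
  ext f ⟨u, v⟩
  rcases lt_or_ge v a with h | h
  · rw [Xop_pow_apply q a a f u v h, if_pos h]; rfl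
  · rw [Xop_pow_high q a a (by omega) f u v h]; rfl

lemma Yop_pow_apply (b : ℕ) (j : ℕ) (f : V k) (u v : ℕ) (hu : u < b) :
    (Yop (k := k) b ^ j) f (u, v) = if u < j then 0 else f (u - j, v) := by
  induction j generalizing f with
  | zero => simp
  | succ j ih =>
    rw [pow_succ, Module.End.mul_apply, ih]
    rcases Nat.lt_trichotomy u j with h | h | h
    · simp [h, Nat.lt_succ_of_lt h]
    · subst h; simp [Nat.lt_succ_self, Nat.sub_self]
    · have h1 : ¬ u < j := by omega
      have h2 : ¬ u < j + 1 := by omega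
      have h3 : ¬ (u - j = 0 ∨ b ≤ u - j) := by omega
      simp only [h1, if_false, h2, Yop_apply, h3]
      rw [Nat.sub_sub]

lemma Yop_pow_high (b : ℕ) (j : ℕ) (hj : j ≠ 0) (f : V k) (u v : ℕ) (hu : b ≤ u) :
    (Yop (k := k) b ^ j) f (u, v) = 0 := by
  obtain ⟨m, rfl⟩ := Nat.exists_eq_succ_of_ne_zero hj
  rw [pow_succ', Module.End.mul_apply, Yop_apply, if_pos (Or.inr hu)]

lemma Yop_pow_b (b : ℕ) (hb : 1 ≤ b) : (Yop (k := k) b) ^ b = 0 := by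
  ext f ⟨u, v⟩
  rcases lt_or_ge u b with h | h
  · rw [Yop_pow_apply b b f u v h, if_pos h]; rfl
  · rw [Yop_pow_high b b (by omega) f u v h]; rfl

lemma XY_comm (q : k) (a b : ℕ) :
    Xop (k := k) q a * Yop b = q • (Yop b * Xop q a) := by
  ext f ⟨u, v⟩
  simp only [Module.End.mul_apply, LinearMap.smul_apply, Pi.smul_apply, smul_eq_mul,
    Xop_apply, Yop_apply]
  by_cases h1 : v = 0 ∨ a ≤ v
  · simp [h1]
  by_cases h2 : u = 0 ∨ b ≤ u
  · simp [h1, h2]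
  · have h1' : ¬ (v = 0 ∨ a ≤ v) := h1
    simp only [h1, if_false, h2, Xop_apply, Yop_apply, h1']
    have hu : q ^ u = q * q ^ (u - 1) := by
      rw [← pow_succ']
      congr 1
      omega
    rw [hu]
    ring


variable (q : k) (a b : ℕ)

/-- the relation-compatible hom out of the free algebra -/
noncomputable def phi : FreeAlgebra k Bool →ₐ[k] Module.End k (V k) :=
  FreeAlgebra.lift k (fun t => if t then Xop q a else Yop b)

lemma phi_rel (ha : 1 ≤ a) (hb : 1 ≤ b) :
    ∀ ⦃u w : FreeAlgebra k Bool⦄, QCIRel k q a b u w → phi q a b u = phi q a b w := by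
  intro u w h
  cases h with
  | xa =>
    rw [map_pow, map_zero, phi, FreeAlgebra.lift_ι_apply, if_pos rfl]
    exact Xop_pow_a q a ha
  | yb =>
    rw [map_pow, map_zero, phi, FreeAlgebra.lift_ι_apply, if_neg (by simp)]
    exact Yop_pow_b b hb
  | comm =>
    rw [map_mul, map_smul, map_mul, phi, FreeAlgebra.lift_ι_apply,
      FreeAlgebra.lift_ι_apply, if_pos rfl, if_neg (by simp)]
    exact XY_comm q a b

noncomputable def psi (ha : 1 ≤ a) (hb : 1 ≤ b) : QCI k q a b →ₐ[k] Module.End k (V k) :=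
  RingQuot.liftAlgHom k ⟨phi q a b, phi_rel q a b ha hb⟩

lemma psi_x (ha : 1 ≤ a) (hb : 1 ≤ b) : psi q a b ha hb (qciX k q a b) = Xop q a := by
  rw [qciX, psi, RingQuot.liftAlgHom_mkAlgHom_apply, phi, FreeAlgebra.lift_ι_apply]
  exact if_pos rfl

lemma psi_y (ha : 1 ≤ a) (hb : 1 ≤ b) : psi q a b ha hb (qciY k q a b) = Yop b := by
  rw [qciY, psi, RingQuot.liftAlgHom_mkAlgHom_apply, phi, FreeAlgebra.lift_ι_apply]
  exact if_neg (by simp)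

noncomputable def Lev (ha : 1 ≤ a) (hb : 1 ≤ b) : QCI k q a b →ₗ[k] V k where
  toFun z := psi q a b ha hb z (e (0, 0))
  map_add' z w := by simp only [map_add, LinearMap.add_apply]
  map_smul' c z := by simp only [map_smul, LinearMap.smul_apply, RingHom.id_apply]

lemma Xop_pow_e (v : ℕ) (hv : v < a) : (Xop (k := k) q a ^ v) (e (0, 0)) = e (0, v) := by
  rcases Nat.eq_zero_or_pos v with h | h
  · subst h; simp
  funext p
  obtain ⟨s, w⟩ := p
  rcases lt_or_ge w a with hw | hw
  · rw [Xop_pow_apply q a v _ s w hw]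
    by_cases h1 : w < v
    · rw [if_pos h1, e, if_neg (by simp; omega)]
    · rw [if_neg h1, e, e]
      by_cases h2 : (s, w - v) = (0, 0)
      · have : (s, w) = ((0 : ℕ), v) := by
          simp only [Prod.mk.injEq] at h2 ⊢
          omega
        rw [if_pos h2, if_pos this, mul_one]
        have : s = 0 := by simp only [Prod.mk.injEq] at h2; exact h2.1
        subst this
        rw [mul_zero, pow_zero]
      · rw [if_neg h2, if_neg (by simp only [Prod.mk.injEq] at h2 ⊢; omega), mul_zero]
  · rw [Xop_pow_high q a v (by omega) _ s w hw, e, if_neg (by simp; omega)]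

lemma Yop_pow_e {b : ℕ} (u v : ℕ) (hu : u < b) :
    (Yop (k := k) b ^ u) (e (0, v)) = e (u, v) := by
  rcases Nat.eq_zero_or_pos u with h | h
  · subst h; simp
  funext p
  obtain ⟨s, w⟩ := p
  rcases lt_or_ge s b with hs | hs
  · rw [Yop_pow_apply b u _ s w hs]
    by_cases h1 : s < u
    · rw [if_pos h1, e, if_neg (by simp; omega)]
    · rw [if_neg h1, e, e]
      by_cases h2 : (s - u, w) = (0, v)
      · rw [if_pos h2, if_pos (by simp only [Prod.mk.injEq] at h2 ⊢; omega)]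
      · rw [if_neg h2, if_neg (by simp only [Prod.mk.injEq] at h2 ⊢; omega)]
  · rw [Yop_pow_high b u (by omega) _ s w hs, e, if_neg (by simp; omega)]

lemma Lev_mono (ha : 1 ≤ a) (hb : 1 ≤ b) (u v : ℕ) (hu : u < b) (hv : v < a) :
    Lev q a b ha hb (qciY k q a b ^ u * qciX k q a b ^ v) = e (u, v) := by
  show psi q a b ha hb _ (e (0,0)) = _
  rw [map_mul, map_pow, map_pow, psi_x, psi_y, Module.End.mul_apply, Xop_pow_e q a v hv,
    Yop_pow_e (b := b) u v hu]

lemma li_e : LinearIndependent k (e (k := k)) := by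
  rw [linearIndependent_iff']
  intro s g h i hi
  have := congrFun h i
  simp only [Finset.sum_apply, Pi.smul_apply, e, smul_eq_mul, mul_ite, mul_one, mul_zero,
    Pi.zero_apply] at this
  rwa [Finset.sum_ite_eq s i g, if_pos hi] at this


lemma x_pow_a : (qciX k q a b) ^ a = 0 := by
  rw [qciX, ← map_pow, RingQuot.mkAlgHom_rel k QCIRel.xa, map_zero]

lemma y_pow_b : (qciY k q a b) ^ b = 0 := by
  rw [qciY, ← map_pow, RingQuot.mkAlgHom_rel k QCIRel.yb, map_zero]

lemma x_mul_y : qciX k q a b * qciY k q a b = q • (qciY k q a b * qciX k q a b) := by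
  rw [qciX, qciY, ← map_mul, RingQuot.mkAlgHom_rel k QCIRel.comm, map_smul, map_mul]

lemma xpow_mul_y (v : ℕ) :
    (qciX k q a b) ^ v * qciY k q a b = q ^ v • (qciY k q a b * (qciX k q a b) ^ v) := by
  induction v with
  | zero => simp
  | succ v ih =>
    rw [pow_succ, mul_assoc, x_mul_y, mul_smul_comm, ← mul_assoc, ih, smul_mul_assoc,
      smul_smul, mul_assoc, ← pow_succ, ← pow_succ']

lemma xpow_mul_ypow (v s : ℕ) :
    (qciX k q a b) ^ v * (qciY k q a b) ^ s
      = q ^ (v * s) • ((qciY k q a b) ^ s * (qciX k q a b) ^ v) := by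
  induction s with
  | zero => simp
  | succ s ih =>
    rw [pow_succ, ← mul_assoc, ih, smul_mul_assoc, mul_assoc, xpow_mul_y, mul_smul_comm,
      smul_smul, ← pow_add, ← mul_assoc, ← pow_succ]
    ring_nf

/-- monomials -/
noncomputable def mono (p : ℕ × ℕ) : QCI k q a b := (qciY k q a b) ^ p.1 * (qciX k q a b) ^ p.2

lemma mono_mul (p r : ℕ × ℕ) :
    mono q a b p * mono q a b r = q ^ (p.2 * r.1) • mono q a b (p.1 + r.1, p.2 + r.2) := by
  obtain ⟨u, v⟩ := p
  obtain ⟨s, t⟩ := r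
  simp only [mono]
  rw [mul_assoc, ← mul_assoc ((qciX k q a b) ^ v), xpow_mul_ypow, smul_mul_assoc,
    mul_smul_comm, ← mul_assoc, ← mul_assoc, ← pow_add, mul_assoc, ← pow_add]

/-- index set of basis monomials -/
def B : Finset (ℕ × ℕ) := Finset.range b ×ˢ Finset.range a

lemma mono_mem_span (ha : 1 ≤ a) (hb : 1 ≤ b) (p : ℕ × ℕ) :
    mono q a b p ∈ Submodule.span k (mono q a b '' ↑(B a b)) := by
  obtain ⟨u, v⟩ := p
  by_cases hub : u < b
  · by_cases hva : v < a
    · exact Submodule.subset_span ⟨(u, v), by simp [B, hub, hva], rfl⟩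
    · have : mono q a b (u, v) = 0 := by
        have hv : v = a + (v - a) := by omega
        rw [mono, hv, pow_add, x_pow_a, zero_mul, mul_zero]
      rw [this]; exact Submodule.zero_mem _
  · have : mono q a b (u, v) = 0 := by
      have hu : u = b + (u - b) := by omega
      rw [mono, hu, pow_add, y_pow_b, zero_mul, zero_mul]
    rw [this]; exact Submodule.zero_mem _

lemma span_mul_closed (ha : 1 ≤ a) (hb : 1 ≤ b) :
    ∀ z₁ ∈ Submodule.span k (mono q a b '' ↑(B a b)),
      ∀ z₂ ∈ Submodule.span k (mono q a b '' ↑(B a b)),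
        z₁ * z₂ ∈ Submodule.span k (mono q a b '' ↑(B a b)) := by
  set W := Submodule.span k (mono q a b '' ↑(B a b)) with hW
  intro z₁ h₁
  refine Submodule.span_induction ?_ ?_ ?_ ?_ h₁
  · rintro m ⟨p, hp, rfl⟩ z₂ h₂
    refine Submodule.span_induction ?_ ?_ ?_ ?_ h₂
    · rintro m' ⟨r, hr, rfl⟩
      rw [mono_mul]
      exact Submodule.smul_mem _ _ (mono_mem_span q a b ha hb _)
    · rw [mul_zero]; exact Submodule.zero_mem _
    · intro w₁ w₂ _ _ hw₁ hw₂
      rw [mul_add]; exact Submodule.add_mem _ hw₁ hw₂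
    · intro c w _ hw
      rw [mul_smul_comm]; exact Submodule.smul_mem _ _ hw
  · intro z₂ _
    rw [zero_mul]; exact Submodule.zero_mem _
  · intro w₁ w₂ _ _ hw₁ hw₂ z₂ h₂
    rw [add_mul]; exact Submodule.add_mem _ (hw₁ z₂ h₂) (hw₂ z₂ h₂)
  · intro c w _ hw z₂ h₂
    rw [smul_mul_assoc]; exact Submodule.smul_mem _ _ (hw z₂ h₂)

lemma span_eq_top (ha : 1 ≤ a) (hb : 1 ≤ b) :
    Submodule.span k (mono q a b '' ↑(B a b)) = ⊤ := by
  set W := Submodule.span k (mono q a b '' ↑(B a b)) with hW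
  rw [eq_top_iff]
  rintro z -
  obtain ⟨w, rfl⟩ := RingQuot.mkAlgHom_surjective k (QCIRel k q a b) z
  induction w using FreeAlgebra.induction with
  | grade0 r =>
    rw [AlgHom.commutes]
    have h1 : (1 : QCI k q a b) ∈ W := by
      have : (1 : QCI k q a b) = mono q a b (0, 0) := by simp [mono]
      rw [this]
      exact mono_mem_span q a b ha hb _
    have : (algebraMap k (QCI k q a b)) r = r • 1 := by
      rw [Algebra.smul_def, mul_one]
    rw [this]
    exact Submodule.smul_mem _ _ h1
  | grade1 t =>
    cases t
    · have : RingQuot.mkAlgHom k (QCIRel k q a b) (FreeAlgebra.ι k false) = mono q a b (1, 0) := by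
        simp [mono, qciY]
      rw [this]
      exact mono_mem_span q a b ha hb _
    · have : RingQuot.mkAlgHom k (QCIRel k q a b) (FreeAlgebra.ι k true) = mono q a b (0, 1) := by
        simp [mono, qciX]
      rw [this]
      exact mono_mem_span q a b ha hb _
  | mul w₁ w₂ hw₁ hw₂ =>
    rw [map_mul]
    exact span_mul_closed q a b ha hb _ hw₁ _ hw₂
  | add w₁ w₂ hw₁ hw₂ =>
    rw [map_add]
    exact Submodule.add_mem _ hw₁ hw₂


lemma zpow_eq_one_imp (hq0 : q ≠ 0) (hq : ∀ n : ℕ, 1 ≤ n → q ^ n ≠ 1) {t : ℤ}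
    (ht : q ^ t = 1) : t = 0 := by
  by_contra h
  rcases lt_or_gt_of_ne h with hlt | hgt
  · have h2 : q ^ (-t) = 1 := by rw [zpow_neg, ht, inv_one]
    have h3 : q ^ ((-t).toNat) = 1 := by
      rw [← zpow_natCast, Int.toNat_of_nonneg (by omega)]; exact h2
    exact hq _ (by omega) h3
  · have h3 : q ^ (t.toNat) = 1 := by
      rw [← zpow_natCast, Int.toNat_of_nonneg (by omega)]; exact ht
    exact hq _ (by omega) h3

lemma zpow_inj' (hq0 : q ≠ 0) (hq : ∀ n : ℕ, 1 ≤ n → q ^ n ≠ 1) {z w : ℤ}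
    (h : q ^ z = q ^ w) : z = w := by
  have h1 : q ^ (z - w) = 1 := by
    rw [zpow_sub₀ hq0, h, div_self (zpow_ne_zero _ hq0)]
  have := zpow_eq_one_imp q hq0 hq h1
  omega

end QCIAux

open QCIAux

/-- for `A = k⟨X,Y⟩/(X^a, XY - qYX, Y^b)` with `a, b ≥ 2` and `q` not a root
of unity (in particular `q ≠ 0`), and `d : A ⊕ A → A` the `k`-linear map given on the basis
by `d(y^u x^v, 0) = (q^{u+1-b} - 1) y^u x^{v+1}` and `d(0, y^u x^v) = (q^{a-1} - q^v) y^{u+1} x^v`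
(these formulas arise from the Nakayama automorphism `ν(x) = q^{1-b} x`, `ν(y) = q^{a-1} y`),
a basis monomial `y^u x^v` lies in the image of `d` if and only if
`(u,v) ∉ {(0,0), (b-1, a-1)}`; hence `dim_k (Im d) = ab - 2`. -/
theorem stmt_18 (k : Type*) [Field k] (q : k) (hq0 : q ≠ 0)
    (hq : ∀ n : ℕ, 1 ≤ n → q ^ n ≠ 1)
    (a b : ℕ) (ha : 2 ≤ a) (hb : 2 ≤ b)
    (x y : QCI k q a b) (hx : x = qciX k q a b) (hy : y = qciY k q a b)
    (ν : QCI k q a b ≃ₐ[k] QCI k q a b)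
    (hνx : ν x = q ^ ((1 : ℤ) - b) • x) (hνy : ν y = q ^ ((a : ℤ) - 1) • y)
    (d : QCI k q a b × QCI k q a b →ₗ[k] QCI k q a b)
    (hd1 : ∀ u v : ℕ, u < b → v < a →
      d (y ^ u * x ^ v, 0) = (q ^ ((u : ℤ) + 1 - b) - 1) • (y ^ u * x ^ (v + 1)))
    (hd2 : ∀ u v : ℕ, u < b → v < a →
      d (0, y ^ u * x ^ v) = (q ^ ((a : ℤ) - 1) - q ^ (v : ℤ)) • (y ^ (u + 1) * x ^ v)) :
    (∀ u v : ℕ, u < b → v < a →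
        (y ^ u * x ^ v ∈ LinearMap.range d ↔
          ¬((u = 0 ∧ v = 0) ∨ (u = b - 1 ∧ v = a - 1)))) ∧
      Module.finrank k (LinearMap.range d) = a * b - 2 := by
  classical
  subst hx hy
  have ha1 : 1 ≤ a := by omega
  have hb1 : 1 ≤ b := by omega
  set M : ℕ × ℕ → QCI k q a b := mono q a b with hM
  have hMdef : ∀ u v : ℕ, M (u, v) = qciY k q a b ^ u * qciX k q a b ^ v := fun u v => rfl
  set F : Finset (ℕ × ℕ) := B a b \ {(0, 0), (b - 1, a - 1)} with hF
  have hFB : F ⊆ B a b := Finset.sdiff_subset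
  have memB : ∀ p : ℕ × ℕ, p ∈ B a b ↔ p.1 < b ∧ p.2 < a := by
    intro p
    simp [B, Finset.mem_product]
  have memF : ∀ p : ℕ × ℕ,
      p ∈ F ↔ (p.1 < b ∧ p.2 < a) ∧ p ≠ (0, 0) ∧ p ≠ (b - 1, a - 1) := by
    intro p
    rw [hF, Finset.mem_sdiff, memB]
    simp [not_or]
  -- scalar injectivity
  have hzpow : ∀ {z w : ℤ}, q ^ z = q ^ w → z = w := fun h => zpow_inj' q hq0 hq h
  -- membership of good monomials in the range
  have mem_range : ∀ u v : ℕ, u < b → v < a →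
      ¬((u = 0 ∧ v = 0) ∨ (u = b - 1 ∧ v = a - 1)) → M (u, v) ∈ LinearMap.range d := by
    intro u v hu hv hexc
    rw [not_or] at hexc
    obtain ⟨h1, h2⟩ := hexc
    have key : ∀ (w : QCI k q a b × QCI k q a b) (c : k), c ≠ 0 → d w = c • M (u, v) →
        M (u, v) ∈ LinearMap.range d := by
      intro w c hc hdw
      exact ⟨c⁻¹ • w, by rw [map_smul, hdw, smul_smul, inv_mul_cancel₀ hc, one_smul]⟩
    rcases Nat.eq_zero_or_pos v with hv0 | hv1
    · subst hv0
      have hu0 : u ≠ 0 := fun h => h1 ⟨h, rfl⟩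
      refine key (0, M (u - 1, 0)) (q ^ ((a : ℤ) - 1) - q ^ ((0 : ℕ) : ℤ)) ?_ ?_
      · refine sub_ne_zero.mpr fun h => ?_
        have := hzpow h
        omega
      · have h := hd2 (u - 1) 0 (by omega) (by omega)
        rw [hMdef]
        rw [show u - 1 + 1 = u by omega] at h
        exact h
    · by_cases hub : u = b - 1
      · have hva : v ≠ a - 1 := fun h => h2 ⟨hub, h⟩
        refine key (0, M (b - 2, v)) (q ^ ((a : ℤ) - 1) - q ^ (v : ℤ)) ?_ ?_
        · refine sub_ne_zero.mpr fun h => ?_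
          have := hzpow h
          omega
        · have h := hd2 (b - 2) v (by omega) hv
          rw [hMdef]
          rw [show b - 2 + 1 = b - 1 by omega, ← hub] at h
          exact h
      · refine key (M (u, v - 1), 0) (q ^ ((u : ℤ) + 1 - b) - 1) ?_ ?_
        · refine sub_ne_zero.mpr fun h => ?_
          rw [show (1 : k) = q ^ (0 : ℤ) by rw [zpow_zero]] at h
          have := hzpow h
          omega
        · have h := hd1 u (v - 1) hu (by omega)
          rw [hMdef]
          rw [show v - 1 + 1 = v by omega] at h
          exact h
  -- the span of the good monomials
  set spanS := Submodule.span k (M '' ↑F) with hspanS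
  -- range d ≤ spanS
  have val1 : ∀ u v : ℕ, u < b → v < a → d (M (u, v), 0) ∈ spanS := by
    intro u v hu hv
    rw [hMdef, hd1 u v hu hv]
    by_cases hub : u = b - 1
    · rw [show ((u : ℤ) + 1 - b) = 0 by omega, zpow_zero, sub_self, zero_smul]
      exact Submodule.zero_mem _
    · by_cases hva : v + 1 = a
      · rw [hva, x_pow_a, mul_zero, smul_zero]
        exact Submodule.zero_mem _
      · refine Submodule.smul_mem _ _ (Submodule.subset_span ⟨(u, v + 1), ?_, rfl⟩)
        rw [Finset.mem_coe, memF]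
        refine ⟨⟨hu, by omega⟩, ?_, ?_⟩ <;> simp [Prod.ext_iff] <;> omega
  have val2 : ∀ u v : ℕ, u < b → v < a → d (0, M (u, v)) ∈ spanS := by
    intro u v hu hv
    rw [hMdef, hd2 u v hu hv]
    by_cases hva : v = a - 1
    · rw [show ((a : ℤ) - 1) = (v : ℤ) by omega, sub_self, zero_smul]
      exact Submodule.zero_mem _
    · by_cases hub : u + 1 = b
      · rw [hub, y_pow_b, zero_mul, smul_zero]
        exact Submodule.zero_mem _
      · refine Submodule.smul_mem _ _ (Submodule.subset_span ⟨(u + 1, v), ?_, rfl⟩)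
        rw [Finset.mem_coe, memF]
        refine ⟨⟨by omega, hv⟩, ?_, ?_⟩ <;> simp [Prod.ext_iff] <;> omega
  have range_le : LinearMap.range d ≤ spanS := by
    rintro z ⟨⟨z1, z2⟩, rfl⟩
    have hsplit : d (z1, z2)
        = d.comp (LinearMap.inl k _ _) z1 + d.comp (LinearMap.inr k _ _) z2 := by
      simp only [LinearMap.comp_apply, LinearMap.inl_apply, LinearMap.inr_apply]
      rw [← map_add, Prod.mk_add_mk, add_zero, zero_add]
    rw [hsplit]
    have htop : ∀ z : QCI k q a b, z ∈ Submodule.span k (M '' ↑(B a b)) := by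
      intro z
      rw [hM, span_eq_top q a b ha1 hb1]
      trivial
    refine Submodule.add_mem _ ?_ ?_
    · have hmem : d.comp (LinearMap.inl k _ _) z1
          ∈ Submodule.map (d.comp (LinearMap.inl k _ _)) (Submodule.span k (M '' ↑(B a b))) :=
        ⟨z1, htop z1, rfl⟩
      rw [Submodule.map_span] at hmem
      refine Submodule.span_le.mpr ?_ hmem
      rintro w ⟨m, ⟨⟨u, v⟩, hp, rfl⟩, rfl⟩
      rw [Finset.mem_coe, memB] at hp
      simpa using val1 u v hp.1 hp.2
    · have hmem : d.comp (LinearMap.inr k _ _) z2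
          ∈ Submodule.map (d.comp (LinearMap.inr k _ _)) (Submodule.span k (M '' ↑(B a b))) :=
        ⟨z2, htop z2, rfl⟩
      rw [Submodule.map_span] at hmem
      refine Submodule.span_le.mpr ?_ hmem
      rintro w ⟨m, ⟨⟨u, v⟩, hp, rfl⟩, rfl⟩
      rw [Finset.mem_coe, memB] at hp
      simpa using val2 u v hp.1 hp.2
  -- linear independence of the monomials indexed by B
  have li_mono : LinearIndependent k
      (fun p : ↥((B a b : Set (ℕ × ℕ))) => M ↑p) := by
    apply LinearIndependent.of_comp (Lev q a b ha1 hb1)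
    have heq : (Lev q a b ha1 hb1) ∘ (fun p : ↥((B a b : Set (ℕ × ℕ))) => M ↑p)
        = (e (k := k)) ∘ (Subtype.val) := by
      funext p
      obtain ⟨⟨u, v⟩, hp⟩ := p
      rw [Finset.mem_coe, memB] at hp
      exact Lev_mono q a b ha1 hb1 u v hp.1 hp.2
    rw [heq]
    exact li_e.comp _ Subtype.val_injective
  -- bad monomials are not in spanS
  have not_mem : ∀ u v : ℕ, u < b → v < a →
      ((u = 0 ∧ v = 0) ∨ (u = b - 1 ∧ v = a - 1)) → M (u, v) ∉ spanS := by
    intro u v hu hv hexc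
    have hpB : (u, v) ∈ (B a b : Set (ℕ × ℕ)) := by
      rw [Finset.mem_coe, memB]
      exact ⟨hu, hv⟩
    have hnotF : (⟨(u, v), hpB⟩ : ↥((B a b : Set (ℕ × ℕ))))
        ∉ (Subtype.val ⁻¹' (F : Set (ℕ × ℕ))) := by
      simp only [Set.mem_preimage, Finset.mem_coe, memF]
      rintro ⟨-, hne1, hne2⟩
      rcases hexc with ⟨e1, e2⟩ | ⟨e1, e2⟩
      · exact hne1 (by simp [e1, e2])
      · exact hne2 (by simp [e1, e2])
    have hns := li_mono.notMem_span_image hnotF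
    have himg : (fun p : ↥((B a b : Set (ℕ × ℕ))) => M ↑p) '' (Subtype.val ⁻¹' (F : Set (ℕ × ℕ)))
        = M '' ↑F := by
      rw [show (fun p : ↥((B a b : Set (ℕ × ℕ))) => M ↑p) = M ∘ Subtype.val from rfl,
        Set.image_comp, Subtype.image_preimage_coe,
        Set.inter_eq_self_of_subset_right (by exact_mod_cast hFB)]
    rw [himg] at hns
    exact hns
  -- range d = spanS
  have range_eq : LinearMap.range d = spanS := by
    refine le_antisymm range_le (Submodule.span_le.mpr ?_)
    rintro w ⟨⟨u, v⟩, hp, rfl⟩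
    rw [Finset.mem_coe, memF] at hp
    refine mem_range u v hp.1.1 hp.1.2 ?_
    rintro (⟨e1, e2⟩ | ⟨e1, e2⟩)
    · exact hp.2.1 (by simp [e1, e2])
    · exact hp.2.2 (by simp [e1, e2])
  constructor
  · intro u v hu hv
    constructor
    · intro hmem hexc
      exact not_mem u v hu hv hexc (range_le hmem)
    · intro hexc
      exact mem_range u v hu hv hexc
  · -- dimension count
    rw [range_eq, hspanS]
    have li_F : LinearIndependent k (fun p : ↥((F : Set (ℕ × ℕ))) => M ↑p) := by
      have hsub : (F : Set (ℕ × ℕ)) ⊆ (B a b : Set (ℕ × ℕ)) := by exact_mod_cast hFB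
      have := li_mono.comp
        (fun p : ↥((F : Set (ℕ × ℕ))) => (⟨↑p, hsub p.2⟩ : ↥((B a b : Set (ℕ × ℕ)))))
        (fun p r h => by
          simp only [Subtype.mk.injEq] at h
          exact Subtype.ext h)
      exact this
    have himg : (M '' ↑F) = Set.range (fun p : ↥((F : Set (ℕ × ℕ))) => M ↑p) := by
      rw [Set.image_eq_range]
    rw [himg, finrank_span_eq_card li_F]
    have hcard2 : ({(0, 0), (b - 1, a - 1)} : Finset (ℕ × ℕ)).card = 2 := by
      rw [Finset.card_insert_of_notMem (by simp [Prod.ext_iff]; omega), Finset.card_singleton]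
    have hsub2 : ({(0, 0), (b - 1, a - 1)} : Finset (ℕ × ℕ)) ⊆ B a b := by
      intro p hp
      rw [memB]
      rcases Finset.mem_insert.mp hp with h | h
      · subst h; constructor <;> omega
      · rw [Finset.mem_singleton] at h; subst h; constructor <;> omega
    have hcardF : F.card = a * b - 2 := by
      rw [hF, Finset.card_sdiff_of_subset hsub2, hcard2]
      have : (B a b).card = b * a := by
        rw [B, Finset.card_product, Finset.card_range, Finset.card_range]
      rw [this]
      ring_nf
    rw [← hcardF]
    rw [← Fintype.card_coe F]
    exact Fintype.card_congr (Equiv.subtypeEquivRight (fun p => Finset.mem_coe))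
end
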